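/- Let M be a matroid on a finite ground set E, let C be a cocircuit of M, and let v ∈ C. Then J(M ⧸ {v}) : x_C = SF₂(J(M)) : x_C = ⋂_{F basis of M with |F ∩ C| = 1} p_{F \ C}. In particular, the ideal J(M ⧸ {v}) : x_C does not depend on the choice of v ∈ C, and it equals the cover ideal of the cofocal matroid of the basic 1-cover given by the indicator function of C (the matroid whose bases are the sets F \ C for F a basis of M with |F ∩ C| = 1). -/

import Mathlib

open Matroid MvPolynomial

/-- The squarefree monomial `x_S = ∏_{i ∈ S} x_i`. -/
noncomputable def xS {α : Type*} [Fintype α] (K : Type*) [Field K] (S : Set α) :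
    MvPolynomial α K :=
  ∏ i ∈ S.toFinite.toFinset, MvPolynomial.X i

/-- The monomial `x^γ = ∏ i, x_i ^ γ(i)`. -/
noncomputable def xPow {α : Type*} [Fintype α] (K : Type*) [Field K] (γ : α → ℕ) :
    MvPolynomial α K :=
  ∏ i : α, (MvPolynomial.X i : MvPolynomial α K) ^ γ i

/-- `p_S`: the ideal of `K[x_i : i ∈ α]` generated by the variables `x_i`, `i ∈ S`. -/
noncomputable def pS {α : Type*} (K : Type*) [Field K] (S : Set α) :
    Ideal (MvPolynomial α K) :=
  Ideal.span (MvPolynomial.X '' S)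

/-- The cover ideal `J(M) = ⋂_{F basis of M} p_F` of a matroid `M`. -/
noncomputable def coverIdeal {α : Type*} [Fintype α] (K : Type*) [Field K] (M : Matroid α) :
    Ideal (MvPolynomial α K) :=
  ⨅ F ∈ {F : Set α | M.IsBase F}, pS K F

/-- The `ℓ`-th symbolic power `J(M)^{(ℓ)} = ⋂_{F basis of M} p_F^ℓ` of the cover ideal. -/
noncomputable def symbPow {α : Type*} [Fintype α] (K : Type*) [Field K] (M : Matroid α)
    (ℓ : ℕ) : Ideal (MvPolynomial α K) :=
  ⨅ F ∈ {F : Set α | M.IsBase F}, (pS K F) ^ ℓ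

/-- `SF_ℓ(J(M))`: the ideal generated by the squarefree monomials of `J(M)^{(ℓ)}`, i.e. by the
monomials `x_S` with `|S ∩ F| ≥ ℓ` for every basis `F` of `M`. -/
noncomputable def SF {α : Type*} [Fintype α] (K : Type*) [Field K] (M : Matroid α)
    (ℓ : ℕ) : Ideal (MvPolynomial α K) :=
  Ideal.span {m : MvPolynomial α K |
    ∃ S : Set α, m = xS K S ∧ ∀ F : Set α, M.IsBase F → ℓ ≤ (S ∩ F).ncard}

/-- Matroid deletion: `M ⧹ D` is the restriction of `M` to `M.E \ D`. -/
def mdel {α : Type*} (M : Matroid α) (D : Set α) : Matroid α := M ↾ (M.E \ D)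

/-- Matroid contraction: `M ⧸ C = (M✶ ⧹ C)✶`. -/
def mcon {α : Type*} (M : Matroid α) (C : Set α) : Matroid α := (mdel M✶ C)✶

/-- A cocircuit of `M`: a minimal subset of the ground set meeting every basis of `M`. -/
def IsCocircuit {α : Type*} (M : Matroid α) (C : Set α) : Prop :=
  C ⊆ M.E ∧ (∀ F, M.IsBase F → (C ∩ F).Nonempty) ∧
    ∀ C' : Set α, C' ⊂ C → ∃ F, M.IsBase F ∧ C' ∩ F = ∅

section Aux

variable {α : Type*} [Fintype α] {K : Type*} [Field K]

/-- The exponent vector (indicator function) of a set `S`. -/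
noncomputable def chi (S : Set α) : α →₀ ℕ :=
  ∑ i ∈ S.toFinite.toFinset, Finsupp.single i 1

lemma chi_apply_mem {S : Set α} {j : α} (h : j ∈ S) : chi S j = 1 := by
  classical
  rw [chi, Finsupp.finset_sum_apply]
  rw [Finset.sum_eq_single_of_mem j (by simpa [Set.Finite.mem_toFinset] using h)
    (fun i _ hi => by simp [Finsupp.single_apply, hi])]
  simp

lemma chi_apply_not_mem {S : Set α} {j : α} (h : j ∉ S) : chi S j = 0 := by
  classical
  rw [chi, Finsupp.finset_sum_apply]
  refine Finset.sum_eq_zero fun i hi => ?_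
  have hij : i ≠ j := fun e => h (e ▸ (Set.Finite.mem_toFinset _).mp hi)
  simp [Finsupp.single_apply, hij]

lemma xS_eq (S : Set α) : xS K S = monomial (chi S) 1 := by
  rw [xS, chi, monomial_sum_one]
  rfl

lemma mem_pS_iff {S : Set α} {f : MvPolynomial α K} :
    f ∈ pS K S ↔ ∀ d ∈ f.support, ∃ i ∈ S, d i ≠ 0 :=
  mem_ideal_span_X_image

lemma xS_mem_pS {S S' : Set α} (h : (S ∩ S').Nonempty) : xS K S ∈ pS K S' := by
  classical
  obtain ⟨j, hjS, hjS'⟩ := h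
  rw [xS, ← Finset.mul_prod_erase _ _ (by simpa [Set.Finite.mem_toFinset] using hjS)]
  exact Ideal.mul_mem_right _ _ (Ideal.subset_span ⟨j, hjS', rfl⟩)

lemma mul_xS_mem_pS_iff {C S : Set α} (hdis : S ∩ C = ∅) {f : MvPolynomial α K} :
    xS K C * f ∈ pS K S ↔ f ∈ pS K S := by
  constructor
  · intro h
    rw [mem_pS_iff] at h ⊢
    intro d hd
    have hsupp : chi C + d ∈ (xS K C * f).support := by
      rw [mem_support_iff, xS_eq, coeff_monomial_mul, one_mul]
      exact mem_support_iff.mp hd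
    obtain ⟨i, hiS, hi⟩ := h _ hsupp
    refine ⟨i, hiS, ?_⟩
    have hiC : i ∉ C := fun hiC =>
      (Set.eq_empty_iff_forall_notMem.mp hdis i) ⟨hiS, hiC⟩
    simpa [Finsupp.add_apply, chi_apply_not_mem hiC] using hi
  · intro h
    exact Ideal.mul_mem_left _ _ h

/-! ### Matroid lemmas -/

lemma exists_base_inter_eq {M : Matroid α} {C : Set α} (hC : _root_.IsCocircuit M C) {u : α}
    (hu : u ∈ C) : ∃ G, M.IsBase G ∧ G ∩ C = {u} := by
  obtain ⟨G, hG, hdis⟩ := hC.2.2 (C \ {u})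
    ⟨Set.diff_subset, fun h => (h hu).2 rfl⟩
  refine ⟨G, hG, ?_⟩
  have hne := hC.2.1 G hG
  have hsub : G ∩ C ⊆ {u} := by
    rintro x ⟨hxG, hxC⟩
    by_contra hxu
    have : x ∈ (C \ {u}) ∩ G := ⟨⟨hxC, hxu⟩, hxG⟩
    simp [hdis] at this
  obtain ⟨y, hyC, hyG⟩ := hne
  have hyu : y = u := hsub ⟨hyG, hyC⟩
  subst hyu
  exact Set.Subset.antisymm hsub (by rintro x rfl; exact ⟨hyG, hyC⟩)

lemma key_exchange {M : Matroid α} (hE : M.E = Set.univ) {C : Set α} (hC : _root_.IsCocircuit M C)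
    {F : Set α} (hF : M.IsBase F) {w : α} (hw : F ∩ C = {w}) {u : α} (hu : u ∈ C) :
    M.IsBase (insert u (F \ C)) := by
  have hground : ∀ X : Set α, X ⊆ M.E := fun X => by rw [hE]; exact Set.subset_univ X
  have hwFC : w ∈ F ∩ C := by rw [hw]; exact Set.mem_singleton w
  have hwF : w ∈ F := hwFC.1
  have hwC : w ∈ C := hwFC.2
  have hIndep : M.Indep (F \ C) := hF.indep.subset Set.diff_subset
  have hnotbase : ¬ M.IsBase (F \ C) := by
    intro h
    have heq : F \ C = F := h.eq_of_subset_isBase hF Set.diff_subset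
    have : w ∈ F \ C := by rw [heq]; exact hwF
    exact this.2 hwC
  have hcl : ∀ z, z ∉ C → z ∈ M.closure (F \ C) := by
    intro z hzC
    by_cases hzF : z ∈ F \ C
    · exact M.mem_closure_of_mem hzF (hground _)
    · rw [hIndep.mem_closure_iff_of_notMem hzF, Matroid.dep_iff]
      refine ⟨?_, hground _⟩
      intro hzi
      by_cases hb : M.IsBase (insert z (F \ C))
      · obtain ⟨y, hyC, hyB⟩ := hC.2.1 _ hb
        rcases hyB with rfl | ⟨_, hyC'⟩
        · exact hzC hyC
        · exact hyC' hyC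
      · obtain ⟨e, he, hei⟩ := hzi.exists_insert_of_not_isBase hb hF
        have heF : e ∈ F := he.1
        have hew : e = w := by
          by_contra hne
          have heC : e ∉ C := fun h => hne (by
            have : e ∈ F ∩ C := ⟨heF, h⟩
            rwa [hw, Set.mem_singleton_iff] at this)
          exact he.2 (Set.mem_insert_of_mem _ ⟨heF, heC⟩)
        rw [hew] at hei
        have hzF' : z ∉ F := fun h => hzF ⟨h, hzC⟩
        have hins : insert w (F \ C) = F := by
          apply Set.Subset.antisymm
          · exact Set.insert_subset hwF Set.diff_subset
          · intro x hxF
            by_cases hxC : x ∈ C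
            · have : x ∈ F ∩ C := ⟨hxF, hxC⟩
              rw [hw, Set.mem_singleton_iff] at this
              exact this ▸ Set.mem_insert _ _
            · exact Set.mem_insert_of_mem _ ⟨hxF, hxC⟩
        rw [Set.insert_comm, hins] at hei
        obtain ⟨B, hB, hsubB⟩ := hei.exists_isBase_superset
        have hFB : F = B := hF.eq_of_subset_isBase hB ((Set.subset_insert _ _).trans hsubB)
        exact hzF' (hFB ▸ hsubB (Set.mem_insert _ _))
  obtain ⟨G, hG, hGC⟩ := exists_base_inter_eq hC hu
  have hGcl : ∀ D : Set α, G ⊆ M.closure D → M.E ⊆ M.closure D := by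
    intro D h
    have := M.closure_subset_closure_of_subset_closure h
    rwa [hG.closure_eq] at this
  have huFC : u ∉ F \ C := fun h => h.2 hu
  have hui : M.Indep (insert u (F \ C)) := by
    by_contra hni
    have hucl : u ∈ M.closure (F \ C) := by
      rw [hIndep.mem_closure_iff_of_notMem huFC, Matroid.dep_iff]
      exact ⟨hni, hground _⟩
    have hGsub : G ⊆ M.closure (F \ C) := by
      intro g hg
      by_cases hgC : g ∈ C
      · have : g ∈ G ∩ C := ⟨hg, hgC⟩
        rw [hGC, Set.mem_singleton_iff] at this
        exact this ▸ hucl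
      · exact hcl g hgC
    exact hnotbase (hIndep.isBase_of_ground_subset_closure (hGcl _ hGsub))
  apply hui.isBase_of_ground_subset_closure
  apply hGcl
  intro g hg
  by_cases hgC : g ∈ C
  · have : g ∈ G ∩ C := ⟨hg, hgC⟩
    rw [hGC, Set.mem_singleton_iff] at this
    rw [this]
    exact M.mem_closure_of_mem (Set.mem_insert _ _) (hground _)
  · exact M.closure_subset_closure (Set.subset_insert _ _) (hcl g hgC)

lemma mcon_base_iff {M : Matroid α} (hE : M.E = Set.univ) {v : α} {G₀ : Set α}
    (hG₀ : M.IsBase G₀) (hvG₀ : v ∈ G₀) {B : Set α} :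
    (mcon M {v}).IsBase B ↔ v ∉ B ∧ M.IsBase (insert v B) := by
  have hEd : (mdel M✶ {v}).E = Set.univ \ {v} := by
    simp [mdel, hE]
  have hdiffeq : ∀ B : Set α, (Set.univ \ {v}) \ B = Set.univ \ insert v B := by
    intro B
    ext x
    simp only [Set.mem_diff, Set.mem_univ, true_and, Set.mem_singleton_iff,
      Set.mem_insert_iff]
    tauto
  have hspan : M✶.Spanning (M✶.E \ {v}) := by
    have h1 : M✶.IsBase (M.E \ G₀) := hG₀.compl_isBase_dual
    refine h1.spanning_of_superset ?_ Set.diff_subset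
    intro x hx
    exact ⟨hx.1, fun h => hx.2 (by rwa [Set.mem_singleton_iff.mp h])⟩
  constructor
  · intro h
    have h' : ((mdel M✶ {v})✶).IsBase B := h
    rw [Matroid.dual_isBase_iff'] at h'
    obtain ⟨hbase, hBsub⟩ := h'
    have hvB : v ∉ B := fun hvB => ((hEd ▸ hBsub) hvB).2 rfl
    refine ⟨hvB, ?_⟩
    rw [hEd] at hbase
    have hBasis : M✶.IsBasis ((Set.univ \ {v}) \ B) (M✶.E \ {v}) := by
      rw [mdel] at hbase
      rw [← Matroid.isBase_restrict_iff Set.diff_subset]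
      convert hbase using 2
    have hbase2 : M✶.IsBase ((Set.univ \ {v}) \ B) := by
      apply hBasis.indep.isBase_of_ground_subset_closure
      rw [hBasis.closure_eq_closure, hspan.closure_eq]
    rw [hdiffeq] at hbase2
    have := hbase2.compl_isBase_of_dual
    rwa [hE, Set.diff_diff_cancel_left (Set.subset_univ _)] at this
  · rintro ⟨hvB, hB⟩
    have h1 : M✶.IsBase (Set.univ \ insert v B) := by
      have := hB.compl_isBase_dual
      rwa [hE] at this
    have h2 : M✶.IsBasis (Set.univ \ insert v B) (M✶.E \ {v}) := by
      refine Matroid.IsBase.isBasis_of_subset Set.diff_subset h1 ?_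
      intro x hx
      rw [Matroid.dual_ground, hE]
      exact ⟨Set.mem_univ x, fun h =>
        hx.2 (Set.mem_insert_iff.mpr (Or.inl (Set.mem_singleton_iff.mp h)))⟩
    have h3 : (mdel M✶ {v}).IsBase (Set.univ \ insert v B) := by
      rw [mdel, Matroid.isBase_restrict_iff Set.diff_subset]
      convert h2 using 2
    show ((mdel M✶ {v})✶).IsBase B
    rw [Matroid.dual_isBase_iff (by
      rw [hEd]
      intro x hx
      exact ⟨Set.mem_univ x, fun h => hvB (by rwa [Set.mem_singleton_iff.mp h] at hx)⟩)]
    rw [hEd, hdiffeq]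
    exact h3

lemma SF_le_pS {M : Matroid α} {C F : Set α} (hF : M.IsBase F) {w : α}
    (hw : F ∩ C = {w}) : SF K M 2 ≤ pS K (F \ C) := by
  rw [SF, Ideal.span_le]
  rintro m ⟨S, rfl, hS⟩
  have h2 := hS F hF
  have hne : (S ∩ (F \ C)).Nonempty := by
    by_contra hempty
    rw [Set.not_nonempty_iff_eq_empty] at hempty
    have hsub : S ∩ F ⊆ {w} := by
      rintro x ⟨hxS, hxF⟩
      by_cases hxC : x ∈ C
      · have : x ∈ F ∩ C := ⟨hxF, hxC⟩
        rwa [hw] at this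
      · exact absurd (show x ∈ S ∩ (F \ C) from ⟨hxS, hxF, hxC⟩) (by simp [hempty])
    have := Set.ncard_le_ncard hsub (Set.finite_singleton w)
    rw [Set.ncard_singleton] at this
    omega
  exact xS_mem_pS hne

end Aux

/-- let `C` be a cocircuit of `M` and `v ∈ C`. Then
`J(M ⧸ {v}) : x_C = SF₂(J(M)) : x_C = ⋂_{F basis, |F ∩ C| = 1} p_{F \ C}`.
In particular `J(M ⧸ {v}) : x_C` does not depend on the choice of `v ∈ C`, and it is the cover
ideal of the cofocal matroid of the basic 1-cover given by the indicator function of `C`. -/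
theorem stmt18 {α : Type*} [Fintype α] (K : Type*) [Field K]
    (M : Matroid α) (hE : M.E = Set.univ)
    (C : Set α) (hC : _root_.IsCocircuit M C) (v : α) (hv : v ∈ C) :
    Submodule.colon (coverIdeal K (mcon M {v})) (Ideal.span {xS K C}) =
      Submodule.colon (SF K M 2) (Ideal.span {xS K C}) ∧
    Submodule.colon (coverIdeal K (mcon M {v})) (Ideal.span {xS K C}) =
      ⨅ F ∈ {F : Set α | M.IsBase F ∧ (F ∩ C).ncard = 1}, pS K (F \ C) := by
  classical
  obtain ⟨G₀, hG₀, hG₀C⟩ := exists_base_inter_eq hC hv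
  have hvG₀ : v ∈ G₀ := by
    have : v ∈ G₀ ∩ C := by rw [hG₀C]; exact Set.mem_singleton v
    exact this.1
  have hdisFC : ∀ F : Set α, (F \ C) ∩ C = ∅ := fun F => by
    ext x; simp only [Set.mem_inter_iff, Set.mem_diff, Set.mem_empty_iff_false, iff_false]
    tauto
  -- membership characterizations
  have hmemT : ∀ x : MvPolynomial α K,
      (x ∈ ⨅ F ∈ {F : Set α | M.IsBase F ∧ (F ∩ C).ncard = 1}, pS K (F \ C)) ↔
      ∀ F, M.IsBase F → (F ∩ C).ncard = 1 → x ∈ pS K (F \ C) := by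
    intro x
    simp [Ideal.mem_iInf, Set.mem_setOf_eq, and_imp]
  have hmemJ : ∀ x : MvPolynomial α K,
      x ∈ coverIdeal K (mcon M {v}) ↔ ∀ B, (mcon M {v}).IsBase B → x ∈ pS K B := by
    intro x
    simp [coverIdeal, Ideal.mem_iInf, Set.mem_setOf_eq]
  -- first main equality : J(M/v) : x_C = T
  have h1 : Submodule.colon (coverIdeal K (mcon M {v})) (Ideal.span {xS K C}) =
      ⨅ F ∈ {F : Set α | M.IsBase F ∧ (F ∩ C).ncard = 1}, pS K (F \ C) := by
    ext x
    rw [Ideal.mem_colon_span_singleton, hmemT, hmemJ]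
    constructor
    · intro h F hF hcard
      obtain ⟨w, hw⟩ := Set.ncard_eq_one.mp hcard
      have hbase : M.IsBase (insert v (F \ C)) := key_exchange hE hC hF hw hv
      have hcon : (mcon M {v}).IsBase (F \ C) :=
        (mcon_base_iff hE hG₀ hvG₀).mpr ⟨fun h => h.2 hv, hbase⟩
      have hx := h _ hcon
      rw [mul_comm] at hx
      exact (mul_xS_mem_pS_iff (hdisFC F)).mp hx
    · intro h B hB
      obtain ⟨hvB, hins⟩ := (mcon_base_iff hE hG₀ hvG₀).mp hB
      by_cases hBC : (C ∩ B).Nonempty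
      · exact Ideal.mul_mem_left _ _ (xS_mem_pS hBC)
      · rw [Set.not_nonempty_iff_eq_empty] at hBC
        have hFC : (insert v B) ∩ C = {v} := by
          apply Set.Subset.antisymm
          · rintro x ⟨hx1, hx2⟩
            rcases hx1 with rfl | hxB
            · rfl
            · exact absurd (show x ∈ C ∩ B from ⟨hx2, hxB⟩) (by simp [hBC])
          · rintro x rfl
            exact ⟨Set.mem_insert _ _, hv⟩
        have hFCd : (insert v B) \ C = B := by
          apply Set.Subset.antisymm
          · rintro x ⟨hx1, hx2⟩
            rcases hx1 with rfl | hxB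
            · exact absurd hv hx2
            · exact hxB
          · intro x hxB
            exact ⟨Set.mem_insert_of_mem _ hxB,
              fun hxC => (Set.eq_empty_iff_forall_notMem.mp hBC x) ⟨hxC, hxB⟩⟩
        have := h (insert v B) hins (by rw [hFC]; exact Set.ncard_singleton v)
        rw [hFCd] at this
        exact Ideal.mul_mem_right _ _ this
  -- second main equality : SF₂ : x_C = T
  have h2 : Submodule.colon (SF K M 2) (Ideal.span {xS K C}) =
      ⨅ F ∈ {F : Set α | M.IsBase F ∧ (F ∩ C).ncard = 1}, pS K (F \ C) := by
    ext x
    rw [Ideal.mem_colon_span_singleton, hmemT]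
    constructor
    · intro h F hF hcard
      obtain ⟨w, hw⟩ := Set.ncard_eq_one.mp hcard
      have hx := SF_le_pS hF hw h
      rw [mul_comm] at hx
      exact (mul_xS_mem_pS_iff (hdisFC F)).mp hx
    · intro h
      rw [mul_comm]
      have hsum : xS K C * x = ∑ d ∈ x.support, monomial (chi C + d) (coeff d x) := by
        conv_lhs => rw [← support_sum_monomial_coeff x]
        rw [Finset.mul_sum]
        refine Finset.sum_congr rfl fun d _ => ?_
        rw [xS_eq, monomial_mul, one_mul]
      rw [hsum]
      apply Ideal.sum_mem
      intro d hd
      set S : Set α := C ∪ {i | d i ≠ 0} with hS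
      have hgen : ∀ F, M.IsBase F → 2 ≤ (S ∩ F).ncard := by
        intro F hF
        by_cases hcard : (F ∩ C).ncard = 1
        · obtain ⟨w, hw⟩ := Set.ncard_eq_one.mp hcard
          have hx := h F hF hcard
          rw [mem_pS_iff] at hx
          obtain ⟨i, hi, hdi⟩ := hx d hd
          have hwFC : w ∈ F ∩ C := by rw [hw]; exact Set.mem_singleton w
          have hwi : w ≠ i := fun hwe => hi.2 (hwe ▸ hwFC.2)
          have hpair : ({w, i} : Set α) ⊆ S ∩ F := by
            rintro y (rfl | rfl)
            · exact ⟨Or.inl hwFC.2, hwFC.1⟩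
            · exact ⟨Or.inr hdi, hi.1⟩
          calc 2 = ({w, i} : Set α).ncard := (Set.ncard_pair hwi).symm
            _ ≤ (S ∩ F).ncard := Set.ncard_le_ncard hpair (Set.toFinite _)
        · have hfc : (F ∩ C).Nonempty := by
            obtain ⟨y, hy1, hy2⟩ := hC.2.1 F hF
            exact ⟨y, hy2, hy1⟩
          have hpos : 0 < (F ∩ C).ncard := (Set.ncard_pos (Set.toFinite _)).mpr hfc
          have h2' : 2 ≤ (F ∩ C).ncard := by omega
          have hsub : F ∩ C ⊆ S ∩ F := fun y hy => ⟨Or.inl hy.2, hy.1⟩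
          calc 2 ≤ (F ∩ C).ncard := h2'
            _ ≤ (S ∩ F).ncard := Set.ncard_le_ncard hsub (Set.toFinite _)
      have hle : chi S ≤ chi C + d := by
        rw [Finsupp.le_def]
        intro i
        rw [Finsupp.add_apply]
        by_cases hiS : i ∈ S
        · rw [chi_apply_mem hiS]
          rcases hiS with hiC | hid
          · rw [chi_apply_mem hiC]; omega
          · have : 1 ≤ d i := Nat.one_le_iff_ne_zero.mpr hid
            omega
        · rw [chi_apply_not_mem hiS]; omega
      have hdecomp : monomial (chi C + d) (coeff d x) =
          xS K S * monomial (chi C + d - chi S) (coeff d x) := by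
        rw [xS_eq, monomial_mul, one_mul, add_tsub_cancel_of_le hle]
      rw [hdecomp]
      exact Ideal.mul_mem_right _ _ (Ideal.subset_span ⟨S, rfl, hgen⟩)
  exact ⟨h1.trans h2.symm, h1⟩
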